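/- Let n ≥ 2 be an integer, let ε ∈ {±1}^{n-1} be a sign pattern, and let A = [c^1 | ⋯ | c^n] be an (n−1)×n real SSR(ε) matrix with columns c^1, …, c^n. Then for every k ∈ {1, …, n}, the k-th column of A can be expressed as a real linear combination of the remaining columns, c^k = Σ_{i=1, i≠k}^{n} x_i c^i, where for each i ≠ k the coefficient x_i is nonzero and sign(x_i) = (−1)^i if k is odd, and sign(x_i) = (−1)^{i−1} if k is even. -/

import Mathlib

/-- `A` is strictly sign regular of order `p` with sign pattern `ε` (`SSR_p(ε)`):
for every `k ∈ {1, …, p}` (here `k = kk.val + 1` for `kk : Fin p`), every `k × k` minor of `A`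
(the determinant of the submatrix on any `k` rows and `k` columns taken in increasing order)
has sign `ε k`, i.e. `ε k` times the minor is strictly positive. -/
def IsSSRp (p : ℕ) {m n : ℕ} (A : Matrix (Fin m) (Fin n) ℝ) (ε : Fin p → ℝ) : Prop :=
  ∀ (kk : Fin p) (r : Fin (kk.val + 1) → Fin m) (c : Fin (kk.val + 1) → Fin n),
    StrictMono r → StrictMono c → 0 < ε kk * (A.submatrix r c).det

lemma key_laplace (m : ℕ) (A : Matrix (Fin (m+1)) (Fin (m+2)) ℝ) (r : Fin (m+1)) :
    ∑ j : Fin (m+2), (-1:ℝ)^(j:ℕ) * (A.submatrix id j.succAbove).det * A r j = 0 := by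
  have hM : (Matrix.of (Fin.snoc A (A r))).det = 0 := by
    apply Matrix.det_zero_of_row_eq (i := Fin.castSucc r) (j := Fin.last (m+1))
    · exact (Fin.castSucc_lt_last r).ne
    · funext q
      simp [Fin.snoc]
  rw [Matrix.det_succ_row _ (Fin.last (m+1))] at hM
  simp only [Fin.val_last, Matrix.of_apply, Fin.snoc_last] at hM
  have h2 : ∀ j : Fin (m+2),
      ((Matrix.of (Fin.snoc A (A r))).submatrix (Fin.last (m+1)).succAbove j.succAbove).det
        = (A.submatrix id j.succAbove).det := by
    intro j
    congr 1
    ext p q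
    simp [Fin.succAbove_last, Fin.snoc, Fin.is_le]
  simp only [h2] at hM
  have := congrArg (fun t => (-1:ℝ)^(m+1) * t) hM
  simp only [mul_zero, Finset.mul_sum] at this
  rw [← this]
  apply Finset.sum_congr rfl
  intro j _
  have he : (-1:ℝ)^(m+1)*(-1:ℝ)^(m+1) = 1 := by
    rw [← pow_add]; exact Even.neg_one_pow ⟨m+1, rfl⟩
  have hsn : Fin.snoc (α := fun _ => Fin (m+2) → ℝ) A (A r) (Fin.last (m + 1)) j = A r j := by simp [Fin.snoc]
  rw [hsn]
  rw [pow_add]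
  linear_combination (-((-1:ℝ)^(j:ℕ) * A r j * (A.submatrix id j.succAbove).det)) * he

theorem stmt_0 (n : ℕ) (hn : 2 ≤ n) (ε : Fin (min (n - 1) n) → ℝ)
    (hε : ∀ i, ε i = 1 ∨ ε i = -1)
    (A : Matrix (Fin (n - 1)) (Fin n) ℝ) (hA : IsSSRp (min (n - 1) n) A ε)
    (k : Fin n) :
    ∃ x : Fin n → ℝ,
      (∀ r : Fin (n - 1), A r k = ∑ i ∈ Finset.univ.erase k, x i * A r i) ∧
      ∀ i : Fin n, i ≠ k →
        0 < (if Even k.val then (-1 : ℝ) ^ (i.val + 1) else (-1 : ℝ) ^ i.val) * x i := by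
  obtain ⟨m, rfl⟩ : ∃ m, n = m + 2 := ⟨n - 2, by omega⟩
  set kk : Fin (min (m + 2 - 1) (m + 2)) := ⟨m, by omega⟩ with hkk
  set d : Fin (m+2) → ℝ := fun j => (A.submatrix (id : Fin (m+1) → Fin (m+1)) j.succAbove).det
    with hdef
  have hd : ∀ j : Fin (m+2), 0 < ε kk * d j := fun j =>
    hA kk id j.succAbove strictMono_id (Fin.strictMono_succAbove j)
  have hdd : ∀ a b : Fin (m+2), 0 < d a * d b := by
    intro a b
    have h1 := hd a
    have h2 := hd b
    rcases hε kk with h | h <;> rw [h] at h1 h2 <;> nlinarith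
  have hk0 : d k ≠ 0 := fun h => by simpa [h] using hdd k k
  have hrel : ∀ r : Fin (m+1), ∑ j : Fin (m+2), (-1:ℝ)^(j:ℕ) * d j * A r j = 0 :=
    fun r => key_laplace m A r
  refine ⟨fun i => -(-1:ℝ)^(i.val + k.val) * d i / d k, ?_, ?_⟩
  · intro r
    have hsum := hrel r
    rw [← Finset.add_sum_erase _ _ (Finset.mem_univ k)] at hsum
    have hne : ((-1:ℝ)^(k.val) * d k) ≠ 0 :=
      mul_ne_zero (pow_ne_zero _ (by norm_num)) hk0
    apply mul_left_cancel₀ hne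
    rw [Finset.mul_sum]
    have hterm : ∀ i ∈ Finset.univ.erase k,
        (-1:ℝ)^(k.val) * d k * (-(-1:ℝ)^(i.val + k.val) * d i / d k * A r i)
          = -((-1:ℝ)^(i.val:ℕ) * d i * A r i) := by
      intro i _
      have hkk2 : (-1:ℝ)^(k.val) * (-1:ℝ)^(k.val) = 1 := by
        rw [← pow_add]; exact Even.neg_one_pow ⟨k.val, rfl⟩
      field_simp
      rw [pow_add]
      linear_combination (-((-1:ℝ)^(i.val:ℕ) * d i * A r i)) * hkk2
    rw [Finset.sum_congr rfl hterm, Finset.sum_neg_distrib]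
    linarith [hsum]
  · intro i hi
    have hs : (if Even k.val then (-1 : ℝ) ^ (i.val + 1) else (-1 : ℝ) ^ i.val)
        = (-1:ℝ)^(i.val + k.val + 1) := by
      rcases Nat.even_or_odd k.val with hk | hk
      · rw [if_pos hk, pow_add, pow_add, pow_add, Even.neg_one_pow hk]
        ring
      · rw [if_neg (Nat.not_even_iff_odd.mpr hk), pow_add, pow_add, Odd.neg_one_pow hk]
        ring
    have ht : (-1:ℝ)^(i.val + k.val) * (-1:ℝ)^(i.val + k.val) = 1 := by
      rw [← pow_add]; exact Even.neg_one_pow ⟨i.val + k.val, rfl⟩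
    have hval : (if Even k.val then (-1 : ℝ) ^ (i.val + 1) else (-1 : ℝ) ^ i.val)
        * (-(-1:ℝ)^(i.val + k.val) * d i / d k) = d i / d k := by
      rw [hs, pow_succ]
      linear_combination (d i / d k) * ht
    rw [hval]
    have hdiv : d i / d k = (d i * d k) / (d k * d k) := by
      rw [div_eq_div_iff hk0 (ne_of_gt (hdd k k))]; ring
    rw [hdiv]
    exact div_pos (hdd i k) (hdd k k)
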